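/- Let m, n be positive natural numbers, X : Matrix (Fin m) (Fin n) ℝ, and y : Fin m → ℝ. Set K = (n : ℝ)⁻¹ • (X * Xᵀ) and μ = (n : ℝ)⁻¹ • (Xᵀ.mulVec ((1 + K)⁻¹.mulVec y)). Then ‖μ‖₂ ≤ n^{-1/2} · √(‖K‖) · ‖y‖₂, where ‖·‖₂ denotes the Euclidean norm of a vector and ‖K‖ denotes the L² operator norm of the matrix K. -/

import Mathlib

open Matrix
open scoped Matrix.Norms.L2Operator

private lemma euc_norm_eq' {k : ℕ} (v : Fin k → ℝ) :
    ‖(EuclideanSpace.equiv (Fin k) ℝ).symm v‖ = Real.sqrt (∑ i, v i ^ 2) := by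
  rw [EuclideanSpace.norm_eq]
  congr 1
  refine Finset.sum_congr rfl fun i _ => ?_
  simp [Real.norm_eq_abs, sq_abs]


/-- The bound from **Example 1** on the posterior mean of Bayesian linear regression:
with `K = (1/n)·XXᵀ` and `μ = (1/n)·Xᵀ(I + K)⁻¹y`, the Euclidean norm of `μ` is at most
`n^{-1/2}·√‖K‖·‖y‖₂`, where `‖K‖` is the L² operator norm of `K`. -/
theorem posterior_mean_norm_bound
    (m n : ℕ) (hm : 0 < m) (hn : 0 < n)
    (X : Matrix (Fin m) (Fin n) ℝ) (y : Fin m → ℝ)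
    (K : Matrix (Fin m) (Fin m) ℝ) (hK : K = (n : ℝ)⁻¹ • (X * Xᵀ))
    (μ : Fin n → ℝ)
    (hμ : μ = (n : ℝ)⁻¹ • (Xᵀ.mulVec (((1 : Matrix (Fin m) (Fin m) ℝ) + K)⁻¹.mulVec y))) :
    Real.sqrt (∑ i, μ i ^ 2) ≤
      (Real.sqrt n)⁻¹ * Real.sqrt ‖K‖ * Real.sqrt (∑ i, y i ^ 2) := by
  have hn0 : (0:ℝ) < n := by exact_mod_cast hn
  -- K is positive semidefinite
  have hXXt : (X * Xᵀ).PosSemidef := by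
    have := Matrix.posSemidef_self_mul_conjTranspose X
    rwa [conjTranspose_eq_transpose_of_trivial] at this
  have hKps : K.PosSemidef := by
    rw [posSemidef_iff_dotProduct_mulVec]
    constructor
    · show Kᴴ = K
      rw [hK, conjTranspose_smul, hXXt.1.eq, star_trivial]
    · intro x
      rw [hK]
      have := hXXt.dotProduct_mulVec_nonneg x
      simp only [smul_mulVec, dotProduct_smul, smul_eq_mul]
      positivity
  set A : Matrix (Fin m) (Fin m) ℝ := (1 : Matrix (Fin m) (Fin m) ℝ) + K with hA
  have hApd : A.PosDef := Matrix.PosDef.add_posSemidef Matrix.PosDef.one hKps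
  set w : Fin m → ℝ := A⁻¹ *ᵥ y with hw
  have hAw : A *ᵥ w = y := by
    rw [hw, mulVec_mulVec, mul_nonsing_inv _ hApd.det_pos.ne'.isUnit, one_mulVec]
  -- step A : ∑ w i ^ 2 ≤ ∑ y i ^ 2
  have hwy : ∑ i, w i ^ 2 ≤ ∑ i, y i ^ 2 := by
    have hy : y = w + K *ᵥ w := by
      rw [← hAw, hA, add_mulVec, one_mulVec]
    have h1 : (0:ℝ) ≤ w ⬝ᵥ (K *ᵥ w) := by simpa using hKps.dotProduct_mulVec_nonneg w
    have h2 : (0:ℝ) ≤ (K *ᵥ w) ⬝ᵥ (K *ᵥ w) := by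
      rw [dotProduct]
      exact Finset.sum_nonneg fun i _ => mul_self_nonneg _
    have hexp : ∑ i, y i ^ 2 = (∑ i, w i ^ 2) + (w ⬝ᵥ (K *ᵥ w) + ((K *ᵥ w) ⬝ᵥ w + (K *ᵥ w) ⬝ᵥ (K *ᵥ w))) := by
      have : ∑ i, y i ^ 2 = y ⬝ᵥ y := by
        rw [dotProduct]; exact Finset.sum_congr rfl fun i _ => (pow_two _)
      rw [this, hy, add_dotProduct, dotProduct_add, dotProduct_add]
      have : ∑ i, w i ^ 2 = w ⬝ᵥ w := by
        rw [dotProduct]; exact Finset.sum_congr rfl fun i _ => (pow_two _)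
      rw [this]; ring
    rw [hexp]
    have h3 : (0:ℝ) ≤ (K *ᵥ w) ⬝ᵥ w := by rwa [dotProduct_comm]
    nlinarith
  -- operator norm of Xᵀ
  have hXt2 : ‖Xᵀ‖ * ‖Xᵀ‖ = (n:ℝ) * ‖K‖ := by
    have h := Matrix.l2_opNorm_conjTranspose_mul_self Xᴴ
    rw [conjTranspose_conjTranspose, conjTranspose_eq_transpose_of_trivial] at h
    rw [← h]
    have hXK : X * Xᵀ = (n:ℝ) • K := by
      rw [hK, smul_smul, mul_inv_cancel₀ hn0.ne', one_smul]
    rw [hXK, norm_smul, Real.norm_natCast]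
  have hXtn : ‖Xᵀ‖ = Real.sqrt n * Real.sqrt ‖K‖ := by
    rw [← Real.sqrt_mul_self (norm_nonneg Xᵀ), hXt2, Real.sqrt_mul hn0.le]
  have hμw : μ = (n:ℝ)⁻¹ • (Xᵀ *ᵥ w) := hμ
  calc Real.sqrt (∑ i, μ i ^ 2)
      = ‖(EuclideanSpace.equiv (Fin n) ℝ).symm μ‖ := (euc_norm_eq' μ).symm
    _ = (n:ℝ)⁻¹ * ‖(EuclideanSpace.equiv (Fin n) ℝ).symm (Xᵀ *ᵥ w)‖ := by
        rw [hμw, _root_.map_smul, norm_smul, Real.norm_eq_abs, abs_of_nonneg (by positivity : (0:ℝ) ≤ (n:ℝ)⁻¹)]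
    _ ≤ (n:ℝ)⁻¹ * (‖Xᵀ‖ * ‖(EuclideanSpace.equiv (Fin m) ℝ).symm w‖) := by
        have := Matrix.l2_opNorm_mulVec Xᵀ ((EuclideanSpace.equiv (Fin m) ℝ).symm w)
        have h2 : (0:ℝ) ≤ (n:ℝ)⁻¹ := by positivity
        exact mul_le_mul_of_nonneg_left this h2
    _ ≤ (n:ℝ)⁻¹ * (‖Xᵀ‖ * Real.sqrt (∑ i, y i ^ 2)) := by
        have h1 : ‖(EuclideanSpace.equiv (Fin m) ℝ).symm w‖ ≤ Real.sqrt (∑ i, y i ^ 2) := by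
          rw [euc_norm_eq']
          exact Real.sqrt_le_sqrt hwy
        have h2 : (0:ℝ) ≤ (n:ℝ)⁻¹ := by positivity
        exact mul_le_mul_of_nonneg_left (mul_le_mul_of_nonneg_left h1 (norm_nonneg _)) h2
    _ = (Real.sqrt n)⁻¹ * Real.sqrt ‖K‖ * Real.sqrt (∑ i, y i ^ 2) := by
        have hs : Real.sqrt (n:ℝ) * Real.sqrt (n:ℝ) = (n:ℝ) := Real.mul_self_sqrt hn0.le
        have hsne : Real.sqrt (n:ℝ) ≠ 0 := by positivity
        have key : ((n:ℝ))⁻¹ * Real.sqrt (n:ℝ) = (Real.sqrt (n:ℝ))⁻¹ := by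
          field_simp
          exact Real.sq_sqrt hn0.le
        calc ((n:ℝ))⁻¹ * (‖Xᵀ‖ * Real.sqrt (∑ i, y i ^ 2))
            = ((n:ℝ)⁻¹ * Real.sqrt (n:ℝ)) * (Real.sqrt ‖K‖ * Real.sqrt (∑ i, y i ^ 2)) := by
              rw [hXtn]; ring
          _ = (Real.sqrt n)⁻¹ * Real.sqrt ‖K‖ * Real.sqrt (∑ i, y i ^ 2) := by
              rw [key]; ring
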